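/- Assume that every non-empty even-hole-free graph G satisfies χ(G) ≤ 2ω(G) − 1. Then for every integer k ≥ 7, every even-hole-free graph with no K_k minor is (2k−5)-colorable. -/

import Mathlib

open SimpleGraph Set

attribute [local instance] Classical.propDecidable

/-- The chromatic number of a graph as a natural number. -/
noncomputable def chromNum {V : Type*} (G : SimpleGraph V) : ℕ := sInf {n | G.Colorable n}

/-- A set of vertices is independent if its elements are pairwise non-adjacent. -/
def IsIndepSet {V : Type*} (G : SimpleGraph V) (A : Set V) : Prop := Gᶜ.IsClique A

/-- The independence number of a graph: the clique number of the complement. -/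
noncomputable def indepNum {V : Type*} (G : SimpleGraph V) [Fintype V] : ℕ := Gᶜ.cliqueNum

/-- A vertex is bisimplicial if its neighborhood is the union of two cliques. -/
def Bisimplicial {V : Type*} (G : SimpleGraph V) (x : V) : Prop :=
  ∃ A B : Set V, G.IsClique A ∧ G.IsClique B ∧ G.neighborSet x = A ∪ B

/-- `G` has a `K_k` minor: there are `k` pairwise disjoint connected branch sets,
pairwise joined by an edge. -/
def HasKMinor {V : Type*} (G : SimpleGraph V) (k : ℕ) : Prop :=
  ∃ f : Fin k → Set V,
    (Pairwise fun i j => Disjoint (f i) (f j)) ∧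
    (∀ i, (G.induce (f i)).Connected) ∧
    (∀ i j, i ≠ j → ∃ u ∈ f i, ∃ v ∈ f j, G.Adj u v)

/-- A graph has an even hole if some even cycle of length at least 4 embeds in it
as an induced subgraph. -/
def HasEvenHole {V : Type*} (G : SimpleGraph V) : Prop :=
  ∃ n : ℕ, 4 ≤ n ∧ Even n ∧ Nonempty (cycleGraph n ↪g G)

/-- A graph is even-hole-free if it has no even hole. -/
def EvenHoleFree {V : Type*} (G : SimpleGraph V) : Prop := ¬ HasEvenHole G

lemma colorable_of_chromNum_le {V : Type} [Fintype V] {G : SimpleGraph V} {n : ℕ}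
    (h : chromNum G ≤ n) : G.Colorable n := by
  have hne : ({m | G.Colorable m} : Set ℕ).Nonempty := ⟨Fintype.card V, G.colorable_of_fintype⟩
  exact (Nat.sInf_mem hne).mono h

lemma EvenHoleFree.induce' {V : Type*} {G : SimpleGraph V} (h : EvenHoleFree G) (s : Set V) :
    EvenHoleFree (G.induce s) := by
  rintro ⟨n, h4, he, ⟨emb⟩⟩
  exact h ⟨n, h4, he, ⟨(SimpleGraph.Embedding.induce s).comp emb⟩⟩

lemma connected_image_val {V : Type*} {G : SimpleGraph V} {s : Set V} {t : Set ↥s}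
    (h : ((G.induce s).induce t).Connected) :
    (G.induce (Subtype.val '' t : Set V)).Connected := by
  let e : ((G.induce s).induce t) ≃g (G.induce (Subtype.val '' t : Set V)) :=
    { toEquiv := Equiv.Set.image Subtype.val t Subtype.val_injective
      map_rel_iff' := by
        intro a b
        simp [Equiv.Set.image, Equiv.Set.imageOfInjOn] }
  exact e.connected_iff.mp h

lemma HasKMinor.of_induce {V : Type*} {G : SimpleGraph V} {s : Set V} {k : ℕ}
    (h : HasKMinor (G.induce s) k) : HasKMinor G k := by
  obtain ⟨f, hdisj, hconn, hadj⟩ := h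
  refine ⟨fun i => Subtype.val '' f i, ?_, ?_, ?_⟩
  · intro i j hij
    rw [Set.disjoint_image_iff Subtype.val_injective]
    exact hdisj hij
  · intro i
    exact connected_image_val (hconn i)
  · intro i j hij
    obtain ⟨u, hu, v, hv, huv⟩ := hadj i j hij
    exact ⟨u, Set.mem_image_of_mem _ hu, v, Set.mem_image_of_mem _ hv, huv⟩

lemma induce_singleton_connected {V : Type*} (G : SimpleGraph V) (v : V) :
    (G.induce ({v} : Set V)).Connected := by
  haveI : Nonempty ({v} : Set V) := ⟨⟨v, rfl⟩⟩
  refine ⟨fun a b => ?_⟩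
  have : a = b := Subtype.ext (a.2.trans b.2.symm)
  exact this ▸ Reachable.refl _

lemma exists_perm_comp {α β : Type*} [Finite β] {f g : α → β}
    (hf : Function.Injective f) (hg : Function.Injective g) :
    ∃ σ : Equiv.Perm β, ∀ a, σ (f a) = g a := by
  classical
  let e : {x // x ∈ Set.range f} ≃ {x // x ∈ Set.range g} :=
    (Equiv.ofInjective f hf).symm.trans (Equiv.ofInjective g hg)
  refine ⟨e.extendSubtype, fun a => ?_⟩
  rw [e.extendSubtype_apply_of_mem (f a) ⟨a, rfl⟩]
  show ↑((Equiv.ofInjective g hg) ((Equiv.ofInjective f hf).symm ⟨f a, ⟨a, rfl⟩⟩)) = g a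
  rw [Equiv.ofInjective_symm_apply]
  simp

lemma avoid_walk_component {V : Type*} (G : SimpleGraph V) (C : Set V) (w : V) (hw : w ∉ C) :
    ∃ D : Set V, w ∈ D ∧ (∀ v ∈ D, v ∉ C) ∧ (G.induce D).Connected ∧
      (∀ u ∈ D, ∀ v, G.Adj u v → v ∉ C → v ∈ D) := by
  classical
  set D : Set V := {v | ∃ p : G.Walk w v, ∀ x ∈ p.support, x ∉ C} with hD
  have hwD : w ∈ D := ⟨Walk.nil, by simp [hw]⟩
  have hDC : ∀ v ∈ D, v ∉ C := by rintro v ⟨p, hp⟩; exact hp v p.end_mem_support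
  have hclose : ∀ u ∈ D, ∀ v, G.Adj u v → v ∉ C → v ∈ D := by
    rintro u ⟨p, hp⟩ v huv hv
    refine ⟨p.concat huv, ?_⟩
    intro x hx
    rw [Walk.support_concat, List.mem_append] at hx
    rcases hx with hx | hx
    · exact hp x hx
    · have : x = v := by simpa using hx
      exact this ▸ hv
  have hsupp : ∀ {v : V} (p : G.Walk w v), (∀ x ∈ p.support, x ∉ C) →
      ∀ x ∈ p.support, x ∈ D := by
    intro v p hp x hx
    exact ⟨p.takeUntil x hx, fun y hy => hp y (p.support_takeUntil_subset hx hy)⟩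
  have hconn : (G.induce D).Connected := by
    apply G.induce_connected_of_patches w hwD
    rintro v ⟨p, hp⟩
    exact ⟨{x | x ∈ p.support}, fun x hx => hsupp p hp x hx, p.start_mem_support,
      p.end_mem_support, (p.connected_induce_support).preconnected _ _⟩
  exact ⟨D, hwD, hDC, hconn, hclose⟩

set_option maxHeartbeats 2000000 in
theorem stmt_4
    (hCS : ∀ (W : Type) [Fintype W] (H : SimpleGraph W), Nonempty W →
      EvenHoleFree H → chromNum H ≤ 2 * H.cliqueNum - 1) :
    ∀ (k : ℕ), 7 ≤ k →
      ∀ (V : Type) [Fintype V] (G : SimpleGraph V),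
        EvenHoleFree G → ¬ HasKMinor G k → G.Colorable (2 * k - 5) := by
  intro k hk
  suffices H : ∀ n : ℕ, ∀ (V : Type) (_ : Fintype V) (G : SimpleGraph V),
      Fintype.card V ≤ n → EvenHoleFree G → ¬ HasKMinor G k → G.Colorable (2 * k - 5) by
    intro V _ G hE hM
    exact H (Fintype.card V) V ‹_› G le_rfl hE hM
  intro n
  induction n with
  | zero =>
    intro V _ G hcard _ _
    exact (G.colorable_of_fintype).mono (by omega)
  | succ n ih =>
    intro V _ G hcard hE hM
    by_cases hsmall : Fintype.card V ≤ 2 * k - 5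
    · exact (G.colorable_of_fintype).mono hsmall
    push_neg at hsmall
    have hne : Nonempty V := by
      rw [← Fintype.card_pos_iff]; omega
    by_cases hom : G.cliqueNum ≤ k - 2
    · exact colorable_of_chromNum_le ((hCS V G hne hE).trans (by omega))
    push_neg at hom
    -- clique of size k - 1
    obtain ⟨s, hs⟩ := G.exists_isNClique_cliqueNum
    obtain ⟨t, hts, htcard⟩ := Finset.exists_subset_card_eq (s := s) (n := k - 1) (by rw [hs.2]; omega)
    have htclique : G.IsClique (t : Set V) := hs.1.subset (Finset.coe_subset.mpr hts)
    -- a vertex outside t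
    have hwex : ∃ w : V, w ∉ (t : Set V) := by
      by_contra hcon
      push_neg at hcon
      have : (Finset.univ : Finset V) ⊆ t := fun x _ => hcon x
      have := Finset.card_le_card this
      rw [Finset.card_univ, htcard] at this
      omega
    obtain ⟨w, hw⟩ := hwex
    obtain ⟨D, hwD, hDC, hDconn, hDclose⟩ := avoid_walk_component G (t : Set V) w hw
    by_cases hcover : ∀ x ∈ (t : Set V), ∃ u ∈ D, G.Adj u x
    · -- K_k minor, contradiction
      exfalso
      apply hM
      obtain ⟨m, rfl⟩ : ∃ m, k = m + 1 := ⟨k - 1, by omega⟩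
      have htm : t.card = m := by omega
      let e : Fin m ≃ ↥t := (t.equivFin.trans (finCongr htm)).symm
      let g : Fin m → V := fun i => ↑(e i)
      have hg_mem : ∀ i, g i ∈ (t : Set V) := fun i => (e i).2
      have hg_inj : Function.Injective g := fun i j h => e.injective (Subtype.ext h)
      let f : Fin (m + 1) → Set V := Fin.lastCases D (fun i => {g i})
      have hflast : f (Fin.last m) = D := Fin.lastCases_last
      have hfcast : ∀ i : Fin m, f i.castSucc = {g i} := fun i => Fin.lastCases_castSucc i
      have hcases : ∀ i : Fin (m + 1), (∃ j : Fin m, i = j.castSucc) ∨ i = Fin.last m :=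
        fun i => Fin.eq_castSucc_or_eq_last i
      refine ⟨f, ?_, ?_, ?_⟩
      · intro i j hij
        rcases hcases i with ⟨i', rfl⟩ | rfl <;> rcases hcases j with ⟨j', rfl⟩ | rfl
        · rw [hfcast, hfcast]
          refine Set.disjoint_singleton.mpr (fun h => ?_)
          exact hij (by rw [hg_inj h])
        · rw [hfcast, hflast]
          exact Set.disjoint_singleton_left.mpr (fun h => hDC _ h (hg_mem i'))
        · rw [hfcast, hflast]
          exact (Set.disjoint_singleton_left.mpr (fun h => hDC _ h (hg_mem j'))).symm
        · exact absurd rfl hij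
      · intro i
        rcases hcases i with ⟨i', rfl⟩ | rfl
        · rw [hfcast]
          exact induce_singleton_connected G (g i')
        · rw [hflast]
          exact hDconn
      · intro i j hij
        rcases hcases i with ⟨i', rfl⟩ | rfl <;> rcases hcases j with ⟨j', rfl⟩ | rfl
        · refine ⟨g i', by rw [hfcast]; rfl, g j', by rw [hfcast]; rfl, ?_⟩
          exact htclique (hg_mem i') (hg_mem j')
            (hg_inj.ne (fun h => hij (by rw [h])))
        · obtain ⟨u, huD, hadj⟩ := hcover (g i') (hg_mem i')
          exact ⟨g i', by rw [hfcast]; rfl, u, by rw [hflast]; exact huD, hadj.symm⟩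
        · obtain ⟨u, huD, hadj⟩ := hcover (g j') (hg_mem j')
          exact ⟨u, by rw [hflast]; exact huD, g j', by rw [hfcast]; rfl, hadj⟩
        · exact absurd rfl hij
    · push_neg at hcover
      obtain ⟨c, hc, hcD⟩ := hcover
      -- glue colorings of S1 = Dᶜ and S2 = D ∪ C'
      set C' : Set V := {x | x ∈ (t : Set V) ∧ ∃ u ∈ D, G.Adj u x} with hC'
      set S1 : Set V := Dᶜ with hS1
      set S2 : Set V := D ∪ C' with hS2
      have hC'S1 : ∀ x ∈ C', x ∉ D := fun x hx => hDC x |> fun h hxd => h hxd hx.1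
      have hcS2 : c ∉ S2 := by
        rintro (h | h)
        · exact hDC c h hc
        · obtain ⟨u, hu, hadj⟩ := h.2
          exact hcD u hu hadj
      have card1 : Fintype.card ↥S1 ≤ n := by
        have : Fintype.card ↥S1 < Fintype.card V :=
          Fintype.card_lt_of_injective_of_notMem Subtype.val Subtype.val_injective
            (by rw [Subtype.range_coe]; simpa [hS1] using hwD)
        omega
      have card2 : Fintype.card ↥S2 ≤ n := by
        have : Fintype.card ↥S2 < Fintype.card V :=
          Fintype.card_lt_of_injective_of_notMem Subtype.val Subtype.val_injective
            (by rw [Subtype.range_coe]; exact hcS2)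
        omega
      obtain ⟨φ1⟩ := ih ↥S1 _ (G.induce S1) card1 (hE.induce' S1)
        (fun h => hM h.of_induce)
      obtain ⟨φ2⟩ := ih ↥S2 _ (G.induce S2) card2 (hE.induce' S2)
        (fun h => hM h.of_induce)
      -- color permutation matching the two colorings on C'
      let ψ1 : ↥C' → Fin (2 * k - 5) := fun x => φ1 ⟨x, fun hxd => hC'S1 x x.2 hxd⟩
      let ψ2 : ↥C' → Fin (2 * k - 5) := fun x => φ2 ⟨x, Or.inr x.2⟩
      have hψ1 : Function.Injective ψ1 := by
        intro x y hxy
        by_contra hne'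
        have hvne : (x : V) ≠ (y : V) := fun h => hne' (Subtype.ext h)
        have hadj : (G.induce S1).Adj ⟨↑x, fun hxd => hC'S1 ↑x x.2 hxd⟩
            ⟨↑y, fun hyd => hC'S1 ↑y y.2 hyd⟩ := htclique x.2.1 y.2.1 hvne
        exact φ1.valid hadj hxy
      have hψ2 : Function.Injective ψ2 := by
        intro x y hxy
        by_contra hne'
        have hvne : (x : V) ≠ (y : V) := fun h => hne' (Subtype.ext h)
        have hadj : (G.induce S2).Adj ⟨↑x, Or.inr x.2⟩ ⟨↑y, Or.inr y.2⟩ :=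
          htclique x.2.1 y.2.1 hvne
        exact φ2.valid hadj hxy
      obtain ⟨σ, hσ⟩ := exists_perm_comp hψ2 hψ1
      -- build the coloring of G
      let Φ : V → Fin (2 * k - 5) := fun v =>
        if h : v ∈ D then σ (φ2 ⟨v, Or.inl h⟩) else φ1 ⟨v, h⟩
      have key : ∀ a b : V, G.Adj a b → a ∈ D → b ∉ D → Φ a ≠ Φ b := by
        intro a b hab ha hb
        have hbt : b ∈ (t : Set V) := by
          by_contra hbt
          exact hb (hDclose a ha b hab hbt)
        have hbC' : b ∈ C' := ⟨hbt, a, ha, hab⟩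
        have hΦb : Φ b = σ (φ2 ⟨b, Or.inr hbC'⟩) := by
          have h1 : Φ b = φ1 ⟨b, hb⟩ := dif_neg hb
          have h2 : σ (ψ2 ⟨b, hbC'⟩) = ψ1 ⟨b, hbC'⟩ := hσ _
          rw [h1]
          exact h2.symm
        have hΦa : Φ a = σ (φ2 ⟨a, Or.inl ha⟩) := dif_pos ha
        rw [hΦa, hΦb]
        intro hEq
        have := σ.injective hEq
        exact φ2.valid (by exact hab : (G.induce S2).Adj ⟨a, Or.inl ha⟩ ⟨b, Or.inr hbC'⟩) this
      refine ⟨Coloring.mk Φ ?_⟩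
      intro a b hab
      by_cases ha : a ∈ D <;> by_cases hb : b ∈ D
      · have hΦa : Φ a = σ (φ2 ⟨a, Or.inl ha⟩) := dif_pos ha
        have hΦb : Φ b = σ (φ2 ⟨b, Or.inl hb⟩) := dif_pos hb
        rw [hΦa, hΦb]
        intro hEq
        exact φ2.valid (by exact hab : (G.induce S2).Adj ⟨a, Or.inl ha⟩ ⟨b, Or.inl hb⟩)
          (σ.injective hEq)
      · exact key a b hab ha hb
      · exact (key b a hab.symm hb ha).symm
      · have hΦa : Φ a = φ1 ⟨a, ha⟩ := dif_neg ha
        have hΦb : Φ b = φ1 ⟨b, hb⟩ := dif_neg hb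
        rw [hΦa, hΦb]
        exact φ1.valid (by exact hab : (G.induce S1).Adj ⟨a, ha⟩ ⟨b, hb⟩)
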